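/- (Remark after Theorem 1.) Let ρ and ρ' be two canonical two-qubit states, both positive semidefinite, which have the same parameters my, m'x, m'y, m'z and Cyy but possibly different parameters mx, mz, Cxx, Czz. Then for every α, z, u : ℝ for which the relevant post-selection traces are nonzero, the signaling differences coincide: P₊(Π(z,u)) − P₋(Π(z,u)) computed from ρ equals P₊(Π(z,u)) − P₋(Π(z,u)) computed from ρ'; i.e., the difference does not depend on mx, mz, Cxx, Czz. -/

import Mathlib

open Matrix Kronecker Complex
open scoped ComplexOrder

noncomputable section

/-- Pauli matrix `σx`. -/
def σx : Matrix (Fin 2) (Fin 2) ℂ := !![0, 1; 1, 0]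

/-- Pauli matrix `σy`. -/
def σy : Matrix (Fin 2) (Fin 2) ℂ := !![0, -Complex.I; Complex.I, 0]

/-- Pauli matrix `σz`. -/
def σz : Matrix (Fin 2) (Fin 2) ℂ := !![1, 0; 0, -1]

/-- The simulated PT-symmetric evolution operator at the chosen time. -/
def Upt (α : ℝ) : Matrix (Fin 2) (Fin 2) ℂ :=
  !![(Real.sin α : ℂ), -Complex.I; -Complex.I, -(Real.sin α : ℂ)]

/-- Alice's operation `A₊` (do nothing). -/
def Apos : Matrix (Fin 2) (Fin 2) ℂ := 1

/-- Alice's operation `A₋` (bit flip `σx`). -/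
def Aneg : Matrix (Fin 2) (Fin 2) ℂ := σx

/-- Unnormalized post-selected state after Alice applies `A₊` followed by the
simulated PT evolution. -/
def postPlus (α : ℝ) (ρ : Matrix (Fin 2 × Fin 2) (Fin 2 × Fin 2) ℂ) :
    Matrix (Fin 2 × Fin 2) (Fin 2 × Fin 2) ℂ :=
  ((Upt α * Apos) ⊗ₖ (1 : Matrix (Fin 2) (Fin 2) ℂ)) * ρ *
    ((Upt α * Apos) ⊗ₖ (1 : Matrix (Fin 2) (Fin 2) ℂ))ᴴ

/-- Unnormalized post-selected state after Alice applies `A₋` followed by the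
simulated PT evolution. -/
def postMinus (α : ℝ) (ρ : Matrix (Fin 2 × Fin 2) (Fin 2 × Fin 2) ℂ) :
    Matrix (Fin 2 × Fin 2) (Fin 2 × Fin 2) ℂ :=
  ((Upt α * Aneg) ⊗ₖ (1 : Matrix (Fin 2) (Fin 2) ℂ)) * ρ *
    ((Upt α * Aneg) ⊗ₖ (1 : Matrix (Fin 2) (Fin 2) ℂ))ᴴ

/-- Probability that Bob obtains outcome `Π` given Alice applied `A₊`. -/
def Pplus (α : ℝ) (ρ : Matrix (Fin 2 × Fin 2) (Fin 2 × Fin 2) ℂ)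
    (Pi : Matrix (Fin 2) (Fin 2) ℂ) : ℝ :=
  ((((1 : Matrix (Fin 2) (Fin 2) ℂ) ⊗ₖ Pi) * postPlus α ρ).trace).re /
    ((postPlus α ρ).trace).re

/-- Probability that Bob obtains outcome `Π` given Alice applied `A₋`. -/
def Pminus (α : ℝ) (ρ : Matrix (Fin 2 × Fin 2) (Fin 2 × Fin 2) ℂ)
    (Pi : Matrix (Fin 2) (Fin 2) ℂ) : ℝ :=
  ((((1 : Matrix (Fin 2) (Fin 2) ℂ) ⊗ₖ Pi) * postMinus α ρ).trace).re /
    ((postMinus α ρ).trace).re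

/-- Bob's `σy`-measurement projector onto `|+_y⟩ = (|0⟩ + i|1⟩)/√2`. -/
def Piy : Matrix (Fin 2) (Fin 2) ℂ :=
  (1/2 : ℂ) • !![1, -Complex.I; Complex.I, 1]

/-- Bob's rank-one projector `Π(z,u)` for an arbitrary projective measurement. -/
def Pizu (z u : ℝ) : Matrix (Fin 2) (Fin 2) ℂ :=
  !![((Real.cos (z/2))^2 : ℂ),
     (Real.cos (z/2) : ℂ) * (Real.sin (z/2) : ℂ) * Complex.exp (-(Complex.I * u));
     (Real.cos (z/2) : ℂ) * (Real.sin (z/2) : ℂ) * Complex.exp (Complex.I * u),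
     ((Real.sin (z/2))^2 : ℂ)]

/-- The single-qubit state `|+⟩ = (|0⟩ + |1⟩)/√2`. -/
def ketPlus : Fin 2 → ℂ := ![((1 / Real.sqrt 2 : ℝ) : ℂ), ((1 / Real.sqrt 2 : ℝ) : ℂ)]

/-- The single-qubit state `|−⟩ = (|0⟩ − |1⟩)/√2`. -/
def ketMinus : Fin 2 → ℂ := ![((1 / Real.sqrt 2 : ℝ) : ℂ), ((-(1 / Real.sqrt 2) : ℝ) : ℂ)]

/-- The (normalized) pure state `|ψ_{β,γ}⟩ = (β|++⟩ + γ|−−⟩)/√(β²+γ²)`. -/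
def ψpure (β γ : ℝ) : Fin 2 × Fin 2 → ℂ := fun q =>
  ((β : ℂ) * (ketPlus q.1 * ketPlus q.2) + (γ : ℂ) * (ketMinus q.1 * ketMinus q.2)) /
    ((Real.sqrt (β^2 + γ^2) : ℝ) : ℂ)

/-- The pure two-qubit density matrix `ρ_{β,γ} = |ψ_{β,γ}⟩⟨ψ_{β,γ}|`. -/
def ρpure (β γ : ℝ) : Matrix (Fin 2 × Fin 2) (Fin 2 × Fin 2) ℂ :=
  Matrix.vecMulVec (ψpure β γ) (fun q => starRingEnd ℂ (ψpure β γ q))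

/-- The maximally entangled state `|ψ⁺⟩ = (|00⟩ + |11⟩)/√2`. -/
def ψmax : Fin 2 × Fin 2 → ℂ := fun q =>
  if q.1 = q.2 then ((1 / Real.sqrt 2 : ℝ) : ℂ) else 0

/-- The two-qubit Werner state `ρ_W(p) = p |ψ⁺⟩⟨ψ⁺| + ((1-p)/4) 1`. -/
def ρWerner (p : ℝ) : Matrix (Fin 2 × Fin 2) (Fin 2 × Fin 2) ℂ :=
  (p : ℂ) • Matrix.vecMulVec ψmax (fun q => starRingEnd ℂ (ψmax q)) +
    (((1 - p) / 4 : ℝ) : ℂ) • 1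

/-- The canonical two-qubit state with magnetizations `mx my mz` (Alice),
`nx ny nz` (Bob) and diagonal correlators `Cxx Cyy Czz`. -/
def ρcan (mx my mz nx ny nz Cxx Cyy Czz : ℝ) :
    Matrix (Fin 2 × Fin 2) (Fin 2 × Fin 2) ℂ :=
  (1/4 : ℂ) • ((1 : Matrix (Fin 2 × Fin 2) (Fin 2 × Fin 2) ℂ)
    + (mx : ℂ) • (σx ⊗ₖ (1 : Matrix (Fin 2) (Fin 2) ℂ))
    + (my : ℂ) • (σy ⊗ₖ (1 : Matrix (Fin 2) (Fin 2) ℂ))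
    + (mz : ℂ) • (σz ⊗ₖ (1 : Matrix (Fin 2) (Fin 2) ℂ))
    + (nx : ℂ) • ((1 : Matrix (Fin 2) (Fin 2) ℂ) ⊗ₖ σx)
    + (ny : ℂ) • ((1 : Matrix (Fin 2) (Fin 2) ℂ) ⊗ₖ σy)
    + (nz : ℂ) • ((1 : Matrix (Fin 2) (Fin 2) ℂ) ⊗ₖ σz)
    + (Cxx : ℂ) • (σx ⊗ₖ σx)
    + (Cyy : ℂ) • (σy ⊗ₖ σy)
    + (Czz : ℂ) • (σz ⊗ₖ σz))

/-- The positive semidefinite square root, as `Matrix.PosSemidef.sqrt` was defined in the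
older Mathlib (removed since). -/
def Matrix.PosSemidef.sqrt {n 𝕜 : Type*} [Fintype n] [DecidableEq n] [RCLike 𝕜]
    {A : Matrix n n 𝕜} (hA : A.PosSemidef) : Matrix n n 𝕜 :=
  hA.1.eigenvectorUnitary.1 * diagonal ((↑) ∘ (√·) ∘ hA.1.eigenvalues) *
    (star hA.1.eigenvectorUnitary : Matrix n n 𝕜)

/-- Bob's reduced matrix: the partial trace over Alice's subsystem. -/
def ptraceA (X : Matrix (Fin 2 × Fin 2) (Fin 2 × Fin 2) ℂ) :
    Matrix (Fin 2) (Fin 2) ℂ :=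
  Matrix.of fun i j => ∑ k : Fin 2, X (k, i) (k, j)

/-- The trace distance `T(A,B) = (1/2) tr √((A-B)ᴴ (A-B))`, where the square
root is the positive semidefinite square root. -/
def traceDist (A B : Matrix (Fin 2) (Fin 2) ℂ) : ℝ :=
  (1/2) * (((Matrix.posSemidef_conjTranspose_mul_self (A - B)).sqrt).trace).re


lemma tracePlus_can (α mx my mz nx ny nz Cxx Cyy Czz : ℝ) :
    ((postPlus α (ρcan mx my mz nx ny nz Cxx Cyy Czz)).trace).re =
      1 + Real.sin α ^ 2 + 2 * Real.sin α * my := by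
  rw [postPlus, ρcan, ← Matrix.one_kronecker_one (α := ℂ) (m := Fin 2) (n := Fin 2)]
  simp only [Matrix.one_fin_two, Apos, Aneg, Upt, Pizu, σx, σy, σz, mul_one,
    Matrix.trace, Matrix.diag, Fintype.sum_prod_type, Fin.sum_univ_two,
    Matrix.mul_apply, Matrix.kroneckerMap_apply, Matrix.conjTranspose_apply,
    Matrix.smul_apply, Matrix.add_apply, smul_eq_mul,
    Matrix.cons_val', Matrix.cons_val_zero, Matrix.cons_val_one, Matrix.head_cons,
    Matrix.empty_val', Matrix.cons_val_fin_one, Matrix.head_fin_const,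
    star_mul', star_add, Complex.star_def, _root_.map_mul, map_add, _root_.map_one,
    map_zero, Complex.conj_I, Complex.conj_ofReal, map_neg]
  try generalize Real.cos (z/2) = c
  try generalize Real.sin (z/2) = sp
  simp [Complex.add_re, Complex.add_im, Complex.mul_re, Complex.mul_im,
    Complex.ofReal_re, Complex.ofReal_im, Complex.I_re, Complex.I_im,
    Complex.neg_re, Complex.neg_im, Complex.one_re, Complex.one_im,
    Complex.div_re, Complex.div_im, Complex.normSq,
    Complex.sin_ofReal_re, Complex.sin_ofReal_im,
    Complex.cos_ofReal_re, Complex.cos_ofReal_im,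
    Complex.exp_re, Complex.exp_im, Real.exp_zero, pow_two]
  ring

lemma traceMinus_can (α mx my mz nx ny nz Cxx Cyy Czz : ℝ) :
    ((postMinus α (ρcan mx my mz nx ny nz Cxx Cyy Czz)).trace).re =
      1 + Real.sin α ^ 2 - 2 * Real.sin α * my := by
  rw [postMinus, ρcan, ← Matrix.one_kronecker_one (α := ℂ) (m := Fin 2) (n := Fin 2)]
  simp only [Matrix.one_fin_two, Apos, Aneg, Upt, Pizu, σx, σy, σz, mul_one,
    Matrix.trace, Matrix.diag, Fintype.sum_prod_type, Fin.sum_univ_two,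
    Matrix.mul_apply, Matrix.kroneckerMap_apply, Matrix.conjTranspose_apply,
    Matrix.smul_apply, Matrix.add_apply, smul_eq_mul,
    Matrix.cons_val', Matrix.cons_val_zero, Matrix.cons_val_one, Matrix.head_cons,
    Matrix.empty_val', Matrix.cons_val_fin_one, Matrix.head_fin_const,
    star_mul', star_add, Complex.star_def, _root_.map_mul, map_add, _root_.map_one,
    map_zero, Complex.conj_I, Complex.conj_ofReal, map_neg]
  try generalize Real.cos (z/2) = c
  try generalize Real.sin (z/2) = sp
  simp [Complex.add_re, Complex.add_im, Complex.mul_re, Complex.mul_im,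
    Complex.ofReal_re, Complex.ofReal_im, Complex.I_re, Complex.I_im,
    Complex.neg_re, Complex.neg_im, Complex.one_re, Complex.one_im,
    Complex.div_re, Complex.div_im, Complex.normSq,
    Complex.sin_ofReal_re, Complex.sin_ofReal_im,
    Complex.cos_ofReal_re, Complex.cos_ofReal_im,
    Complex.exp_re, Complex.exp_im, Real.exp_zero, pow_two]
  ring

lemma numPlus_can (α z u mx my mz nx ny nz Cxx Cyy Czz : ℝ) :
    ((((1 : Matrix (Fin 2) (Fin 2) ℂ) ⊗ₖ Pizu z u) *
        postPlus α (ρcan mx my mz nx ny nz Cxx Cyy Czz)).trace).re =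
      (1 + Real.sin α ^ 2) / 2 *
        ((Real.cos (z/2) ^ 2 + Real.sin (z/2) ^ 2)
          + nx * (2 * Real.cos (z/2) * Real.sin (z/2) * Real.cos u)
          + ny * (2 * Real.cos (z/2) * Real.sin (z/2) * Real.sin u)
          + nz * (Real.cos (z/2) ^ 2 - Real.sin (z/2) ^ 2))
      + Real.sin α * (my * (Real.cos (z/2) ^ 2 + Real.sin (z/2) ^ 2)
          + Cyy * (2 * Real.cos (z/2) * Real.sin (z/2) * Real.sin u)) := by
  rw [postPlus, ρcan, ← Matrix.one_kronecker_one (α := ℂ) (m := Fin 2) (n := Fin 2)]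
  simp only [Matrix.one_fin_two, Apos, Aneg, Upt, Pizu, σx, σy, σz, mul_one,
    Matrix.trace, Matrix.diag, Fintype.sum_prod_type, Fin.sum_univ_two,
    Matrix.mul_apply, Matrix.kroneckerMap_apply, Matrix.conjTranspose_apply,
    Matrix.smul_apply, Matrix.add_apply, smul_eq_mul,
    Matrix.cons_val', Matrix.cons_val_zero, Matrix.cons_val_one, Matrix.head_cons,
    Matrix.empty_val', Matrix.cons_val_fin_one, Matrix.head_fin_const,
    star_mul', star_add, Complex.star_def, _root_.map_mul, map_add, _root_.map_one,
    map_zero, Complex.conj_I, Complex.conj_ofReal, map_neg]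
  try generalize Real.cos (z/2) = c
  try generalize Real.sin (z/2) = sp
  simp [Complex.add_re, Complex.add_im, Complex.mul_re, Complex.mul_im,
    Complex.ofReal_re, Complex.ofReal_im, Complex.I_re, Complex.I_im,
    Complex.neg_re, Complex.neg_im, Complex.one_re, Complex.one_im,
    Complex.div_re, Complex.div_im, Complex.normSq,
    Complex.sin_ofReal_re, Complex.sin_ofReal_im,
    Complex.cos_ofReal_re, Complex.cos_ofReal_im,
    Complex.exp_re, Complex.exp_im, Real.exp_zero, pow_two]
  ring

lemma numMinus_can (α z u mx my mz nx ny nz Cxx Cyy Czz : ℝ) :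
    ((((1 : Matrix (Fin 2) (Fin 2) ℂ) ⊗ₖ Pizu z u) *
        postMinus α (ρcan mx my mz nx ny nz Cxx Cyy Czz)).trace).re =
      (1 + Real.sin α ^ 2) / 2 *
        ((Real.cos (z/2) ^ 2 + Real.sin (z/2) ^ 2)
          + nx * (2 * Real.cos (z/2) * Real.sin (z/2) * Real.cos u)
          + ny * (2 * Real.cos (z/2) * Real.sin (z/2) * Real.sin u)
          + nz * (Real.cos (z/2) ^ 2 - Real.sin (z/2) ^ 2))
      - Real.sin α * (my * (Real.cos (z/2) ^ 2 + Real.sin (z/2) ^ 2)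
          + Cyy * (2 * Real.cos (z/2) * Real.sin (z/2) * Real.sin u)) := by
  rw [postMinus, ρcan, ← Matrix.one_kronecker_one (α := ℂ) (m := Fin 2) (n := Fin 2)]
  simp only [Matrix.one_fin_two, Apos, Aneg, Upt, Pizu, σx, σy, σz, mul_one,
    Matrix.trace, Matrix.diag, Fintype.sum_prod_type, Fin.sum_univ_two,
    Matrix.mul_apply, Matrix.kroneckerMap_apply, Matrix.conjTranspose_apply,
    Matrix.smul_apply, Matrix.add_apply, smul_eq_mul,
    Matrix.cons_val', Matrix.cons_val_zero, Matrix.cons_val_one, Matrix.head_cons,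
    Matrix.empty_val', Matrix.cons_val_fin_one, Matrix.head_fin_const,
    star_mul', star_add, Complex.star_def, _root_.map_mul, map_add, _root_.map_one,
    map_zero, Complex.conj_I, Complex.conj_ofReal, map_neg]
  try generalize Real.cos (z/2) = c
  try generalize Real.sin (z/2) = sp
  simp [Complex.add_re, Complex.add_im, Complex.mul_re, Complex.mul_im,
    Complex.ofReal_re, Complex.ofReal_im, Complex.I_re, Complex.I_im,
    Complex.neg_re, Complex.neg_im, Complex.one_re, Complex.one_im,
    Complex.div_re, Complex.div_im, Complex.normSq,
    Complex.sin_ofReal_re, Complex.sin_ofReal_im,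
    Complex.cos_ofReal_re, Complex.cos_ofReal_im,
    Complex.exp_re, Complex.exp_im, Real.exp_zero, pow_two]
  ring


/-- Remark after Theorem 1: the signaling difference does not depend on the
parameters `mx`, `mz`, `Cxx`, `Czz` of the canonical two-qubit state. -/
theorem stmt10 (mx my mz nx ny nz Cxx Cyy Czz mx' mz' Cxx' Czz' : ℝ)
    (ρ ρ' : Matrix (Fin 2 × Fin 2) (Fin 2 × Fin 2) ℂ)
    (hρ : ρ = ρcan mx my mz nx ny nz Cxx Cyy Czz)
    (hρ' : ρ' = ρcan mx' my mz' nx ny nz Cxx' Cyy Czz')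
    (hpsd : ρ.PosSemidef) (hpsd' : ρ'.PosSemidef) :
    ∀ α z u : ℝ,
      ((postPlus α ρ).trace).re ≠ 0 →
      ((postMinus α ρ).trace).re ≠ 0 →
      ((postPlus α ρ').trace).re ≠ 0 →
      ((postMinus α ρ').trace).re ≠ 0 →
      Pplus α ρ (Pizu z u) - Pminus α ρ (Pizu z u) =
        Pplus α ρ' (Pizu z u) - Pminus α ρ' (Pizu z u) := by
  subst hρ hρ'
  intro α z u _ _ _ _
  unfold Pplus Pminus
  rw [tracePlus_can, traceMinus_can, numPlus_can, numMinus_can,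
    tracePlus_can, traceMinus_can, numPlus_can, numMinus_can]
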